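/- If (u¹, a¹, u², a²) is a smooth solution of the augmented system i curl u² + i∇a² − k u¹ = f¹, −i div u² − k a¹ = h¹, −i curl u¹ − i∇a¹ − k u² = f², i div u¹ − k a² = h² on a domain G ⊆ ℝ³ with k ≠ 0, and the right-hand side satisfies the compatibility conditions div f¹ − i k h² = 0 and div f² + i k h¹ = 0 in G, then a¹ and a² satisfy the Helmholtz equations Δa¹ + k² a¹ = 0 and Δa² + k² a² = 0 in G. -/

import Mathlib

noncomputable def pd3 (i : Fin 3) (f : (Fin 3 → ℝ) → ℂ) (x : Fin 3 → ℝ) : ℂ :=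
  fderiv ℝ f x (Pi.single i 1)

noncomputable def curl3 (F : (Fin 3 → ℝ) → Fin 3 → ℂ) (x : Fin 3 → ℝ) : Fin 3 → ℂ :=
  ![pd3 1 (fun y => F y 2) x - pd3 2 (fun y => F y 1) x,
    pd3 2 (fun y => F y 0) x - pd3 0 (fun y => F y 2) x,
    pd3 0 (fun y => F y 1) x - pd3 1 (fun y => F y 0) x]

noncomputable def div3 (F : (Fin 3 → ℝ) → Fin 3 → ℂ) (x : Fin 3 → ℝ) : ℂ :=
  pd3 0 (fun y => F y 0) x + pd3 1 (fun y => F y 1) x + pd3 2 (fun y => F y 2) x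

noncomputable def grad3 (f : (Fin 3 → ℝ) → ℂ) (x : Fin 3 → ℝ) : Fin 3 → ℂ :=
  ![pd3 0 f x, pd3 1 f x, pd3 2 f x]

noncomputable def lap3 (f : (Fin 3 → ℝ) → ℂ) (x : Fin 3 → ℝ) : ℂ :=
  pd3 0 (pd3 0 f) x + pd3 1 (pd3 1 f) x + pd3 2 (pd3 2 f) x

section Aux
variable {G : Set (Fin 3 → ℝ)} {x : Fin 3 → ℝ}

lemma diffAt_of_smoothOn {f : (Fin 3 → ℝ) → ℂ} (hG : IsOpen G)
    (hf : ContDiffOn ℝ (⊤ : ℕ∞) f G) (hx : x ∈ G) : DifferentiableAt ℝ f x :=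
  (hf.contDiffAt (hG.mem_nhds hx)).differentiableAt (by simp)

lemma pd3_smoothOn {f : (Fin 3 → ℝ) → ℂ} (hG : IsOpen G)
    (hf : ContDiffOn ℝ (⊤ : ℕ∞) f G) (i : Fin 3) :
    ContDiffOn ℝ (⊤ : ℕ∞) (pd3 i f) G := by
  have h' : ContDiffOn ℝ (⊤ : ℕ∞) (fderiv ℝ f) G := hf.fderiv_of_isOpen hG (by exact_mod_cast le_top)
  exact (ContinuousLinearMap.apply ℝ ℂ (Pi.single i 1 : Fin 3 → ℝ)).contDiff.comp_contDiffOn h'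

lemma pd3_congr {f g : (Fin 3 → ℝ) → ℂ} (hG : IsOpen G) (hx : x ∈ G)
    (h : ∀ y ∈ G, f y = g y) (i : Fin 3) : pd3 i f x = pd3 i g x := by
  unfold pd3
  rw [Filter.EventuallyEq.fderiv_eq (Filter.eventuallyEq_of_mem (hG.mem_nhds hx) h)]

lemma pd3_comm {f : (Fin 3 → ℝ) → ℂ} (hG : IsOpen G)
    (hf : ContDiffOn ℝ (⊤ : ℕ∞) f G) (hx : x ∈ G) (i j : Fin 3) :
    pd3 i (pd3 j f) x = pd3 j (pd3 i f) x := by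
  have h' : ContDiffOn ℝ (⊤ : ℕ∞) (fderiv ℝ f) G := hf.fderiv_of_isOpen hG (by exact_mod_cast le_top)
  have hev : ∀ᶠ y in nhds x, HasFDerivAt f (fderiv ℝ f y) y := by
    filter_upwards [hG.mem_nhds hx] with y hy using
      (diffAt_of_smoothOn hG hf hy).hasFDerivAt
  have hd' : DifferentiableAt ℝ (fderiv ℝ f) x :=
    (h'.contDiffAt (hG.mem_nhds hx)).differentiableAt (by simp)
  have hx' : HasFDerivAt (fderiv ℝ f) (fderiv ℝ (fderiv ℝ f) x) x := hd'.hasFDerivAt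
  have key : ∀ v w : Fin 3 → ℝ,
      fderiv ℝ (fun y => fderiv ℝ f y v) x w = fderiv ℝ (fderiv ℝ f) x w v := by
    intro v w
    rw [fderiv_clm_apply hd' (differentiableAt_const v)]
    simp
  have hsym := second_derivative_symmetric_of_eventually hev hx'
    (Pi.single j 1) (Pi.single i 1)
  show fderiv ℝ (fun y => fderiv ℝ f y (Pi.single j 1)) x (Pi.single i 1) =
    fderiv ℝ (fun y => fderiv ℝ f y (Pi.single i 1)) x (Pi.single j 1)
  rw [key, key, hsym]

lemma pd3_comb {A B C : (Fin 3 → ℝ) → ℂ} {c1 c2 c3 : ℂ} (i : Fin 3)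
    (hA : DifferentiableAt ℝ A x) (hB : DifferentiableAt ℝ B x)
    (hC : DifferentiableAt ℝ C x) :
    pd3 i (fun y => c1 * A y + c2 * B y - c3 * C y) x
      = c1 * pd3 i A x + c2 * pd3 i B x - c3 * pd3 i C x := by
  unfold pd3
  rw [fderiv_fun_sub (f := fun y => c1 * A y + c2 * B y) ((hA.const_mul c1).add (hB.const_mul c2)) (hC.const_mul c3),
    fderiv_fun_add (hA.const_mul c1) (hB.const_mul c2),
    fderiv_const_mul hA c1, fderiv_const_mul hB c2, fderiv_const_mul hC c3]
  simp [smul_eq_mul]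

lemma pd3_sub {A B : (Fin 3 → ℝ) → ℂ} (i : Fin 3)
    (hA : DifferentiableAt ℝ A x) (hB : DifferentiableAt ℝ B x) :
    pd3 i (fun y => A y - B y) x = pd3 i A x - pd3 i B x := by
  unfold pd3
  rw [fderiv_fun_sub hA hB]
  simp

/-- The core computation: parametrized by a sign `ε` with `ε * ε = 1`. -/
lemma helmholtz_core (hG : IsOpen G) (k : ℝ) (ε : ℂ) (hε : ε * ε = 1)
    (u u' f : (Fin 3 → ℝ) → Fin 3 → ℂ) (a h : (Fin 3 → ℝ) → ℂ)
    (hu : ContDiffOn ℝ (⊤ : ℕ∞) u G) (hu' : ContDiffOn ℝ (⊤ : ℕ∞) u' G)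
    (ha : ContDiffOn ℝ (⊤ : ℕ∞) a G)
    (he : ∀ y ∈ G, ∀ j, ε * Complex.I * curl3 u y j + ε * Complex.I * grad3 a y j
        - (k : ℂ) * u' y j = f y j)
    (haux : ∀ y ∈ G, ε * Complex.I * div3 u' y - (k : ℂ) * a y = h y)
    (hcc : ∀ y ∈ G, div3 f y - ε * Complex.I * (k : ℂ) * h y = 0)
    (hx : x ∈ G) : lap3 a x + (k : ℂ) ^ 2 * a x = 0 := by
  -- smoothness of the components of u
  have hucomp : ∀ j : Fin 3, ContDiffOn ℝ (⊤ : ℕ∞) (fun y => u y j) G :=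
    fun j => contDiffOn_pi.mp hu j
  have hu'comp : ∀ j : Fin 3, ContDiffOn ℝ (⊤ : ℕ∞) (fun y => u' y j) G :=
    fun j => contDiffOn_pi.mp hu' j
  -- smoothness of curl components
  have hcurl : ∀ j : Fin 3, ContDiffOn ℝ (⊤ : ℕ∞) (fun y => curl3 u y j) G := by
    intro j
    fin_cases j
    · show ContDiffOn ℝ (⊤ : ℕ∞) (fun y => curl3 u y 0) G
      have : (fun y => curl3 u y 0)
          = fun y => pd3 1 (fun z => u z 2) y - pd3 2 (fun z => u z 1) y := by
        funext y; simp [curl3]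
      rw [this]
      exact (pd3_smoothOn hG (hucomp 2) 1).sub (pd3_smoothOn hG (hucomp 1) 2)
    · show ContDiffOn ℝ (⊤ : ℕ∞) (fun y => curl3 u y 1) G
      have : (fun y => curl3 u y 1)
          = fun y => pd3 2 (fun z => u z 0) y - pd3 0 (fun z => u z 2) y := by
        funext y; simp [curl3]
      rw [this]
      exact (pd3_smoothOn hG (hucomp 0) 2).sub (pd3_smoothOn hG (hucomp 2) 0)
    · show ContDiffOn ℝ (⊤ : ℕ∞) (fun y => curl3 u y 2) G
      have : (fun y => curl3 u y 2)
          = fun y => pd3 0 (fun z => u z 1) y - pd3 1 (fun z => u z 0) y := by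
        funext y; simp [curl3]
      rw [this]
      exact (pd3_smoothOn hG (hucomp 1) 0).sub (pd3_smoothOn hG (hucomp 0) 1)
  -- smoothness of grad components
  have hgrad : ∀ j : Fin 3, ContDiffOn ℝ (⊤ : ℕ∞) (fun y => grad3 a y j) G := by
    intro j
    fin_cases j
    · show ContDiffOn ℝ (⊤ : ℕ∞) (fun y => grad3 a y 0) G
      have : (fun y => grad3 a y 0) = pd3 0 a := by funext y; simp [grad3]
      rw [this]; exact pd3_smoothOn hG ha 0
    · show ContDiffOn ℝ (⊤ : ℕ∞) (fun y => grad3 a y 1) G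
      have : (fun y => grad3 a y 1) = pd3 1 a := by funext y; simp [grad3]
      rw [this]; exact pd3_smoothOn hG ha 1
    · show ContDiffOn ℝ (⊤ : ℕ∞) (fun y => grad3 a y 2) G
      have : (fun y => grad3 a y 2) = pd3 2 a := by funext y; simp [grad3]
      rw [this]; exact pd3_smoothOn hG ha 2
  -- expand div3 f x
  have hsplit : ∀ j : Fin 3, pd3 j (fun y => f y j) x
      = ε * Complex.I * pd3 j (fun y => curl3 u y j) x
        + ε * Complex.I * pd3 j (fun y => grad3 a y j) x
        - (k : ℂ) * pd3 j (fun y => u' y j) x := by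
    intro j
    have hcg : pd3 j (fun y => f y j) x
        = pd3 j (fun y => ε * Complex.I * curl3 u y j + ε * Complex.I * grad3 a y j
            - (k : ℂ) * u' y j) x :=
      pd3_congr hG hx (fun y hy => (he y hy j).symm) j
    rw [hcg]
    exact pd3_comb j (diffAt_of_smoothOn hG (hcurl j) hx)
      (diffAt_of_smoothOn hG (hgrad j) hx) (diffAt_of_smoothOn hG (hu'comp j) hx)
  -- div curl = 0
  have hdc : pd3 0 (fun y => curl3 u y 0) x + pd3 1 (fun y => curl3 u y 1) x
      + pd3 2 (fun y => curl3 u y 2) x = 0 := by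
    have h0 : pd3 0 (fun y => curl3 u y 0) x
        = pd3 0 (pd3 1 (fun z => u z 2)) x - pd3 0 (pd3 2 (fun z => u z 1)) x := by
      have := pd3_congr hG hx (f := fun y => curl3 u y 0)
        (g := fun y => pd3 1 (fun z => u z 2) y - pd3 2 (fun z => u z 1) y)
        (fun y _ => by simp [curl3]) 0
      rw [this]
      exact pd3_sub 0 (diffAt_of_smoothOn hG (pd3_smoothOn hG (hucomp 2) 1) hx)
        (diffAt_of_smoothOn hG (pd3_smoothOn hG (hucomp 1) 2) hx)
    have h1 : pd3 1 (fun y => curl3 u y 1) x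
        = pd3 1 (pd3 2 (fun z => u z 0)) x - pd3 1 (pd3 0 (fun z => u z 2)) x := by
      have := pd3_congr hG hx (f := fun y => curl3 u y 1)
        (g := fun y => pd3 2 (fun z => u z 0) y - pd3 0 (fun z => u z 2) y)
        (fun y _ => by simp [curl3]) 1
      rw [this]
      exact pd3_sub 1 (diffAt_of_smoothOn hG (pd3_smoothOn hG (hucomp 0) 2) hx)
        (diffAt_of_smoothOn hG (pd3_smoothOn hG (hucomp 2) 0) hx)
    have h2 : pd3 2 (fun y => curl3 u y 2) x
        = pd3 2 (pd3 0 (fun z => u z 1)) x - pd3 2 (pd3 1 (fun z => u z 0)) x := by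
      have := pd3_congr hG hx (f := fun y => curl3 u y 2)
        (g := fun y => pd3 0 (fun z => u z 1) y - pd3 1 (fun z => u z 0) y)
        (fun y _ => by simp [curl3]) 2
      rw [this]
      exact pd3_sub 2 (diffAt_of_smoothOn hG (pd3_smoothOn hG (hucomp 1) 0) hx)
        (diffAt_of_smoothOn hG (pd3_smoothOn hG (hucomp 0) 1) hx)
    rw [h0, h1, h2,
      pd3_comm hG (hucomp 2) hx 0 1, pd3_comm hG (hucomp 1) hx 0 2,
      pd3_comm hG (hucomp 0) hx 1 2]
    ring
  -- grad components give the Laplacian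
  have hgl : pd3 0 (fun y => grad3 a y 0) x + pd3 1 (fun y => grad3 a y 1) x
      + pd3 2 (fun y => grad3 a y 2) x = lap3 a x := by
    have g0 : (fun y => grad3 a y 0) = pd3 0 a := by funext y; simp [grad3]
    have g1 : (fun y => grad3 a y 1) = pd3 1 a := by funext y; simp [grad3]
    have g2 : (fun y => grad3 a y 2) = pd3 2 a := by funext y; simp [grad3]
    rw [g0, g1, g2]; rfl
  have hdivf : div3 f x = ε * Complex.I * lap3 a x - (k : ℂ) * div3 u' x := by
    unfold div3
    rw [hsplit 0, hsplit 1, hsplit 2]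
    have : ε * Complex.I * (pd3 0 (fun y => curl3 u y 0) x
        + pd3 1 (fun y => curl3 u y 1) x + pd3 2 (fun y => curl3 u y 2) x)
        + ε * Complex.I * (pd3 0 (fun y => grad3 a y 0) x
        + pd3 1 (fun y => grad3 a y 1) x + pd3 2 (fun y => grad3 a y 2) x)
        - (k : ℂ) * (pd3 0 (fun y => u' y 0) x + pd3 1 (fun y => u' y 1) x
        + pd3 2 (fun y => u' y 2) x)
        = ε * Complex.I * lap3 a x - (k : ℂ) * (pd3 0 (fun y => u' y 0) x
          + pd3 1 (fun y => u' y 1) x + pd3 2 (fun y => u' y 2) x) := by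
      rw [hdc, hgl]; ring
    linear_combination this
  have E1 := hcc x hx
  rw [hdivf] at E1
  have E2 := haux x hx
  have hI : Complex.I * Complex.I = -1 := Complex.I_mul_I
  linear_combination (-ε * Complex.I) * E1 - (k : ℂ) * E2
    + (lap3 a x - (k : ℂ) * h x) * (Complex.I * Complex.I) * hε
    + (lap3 a x - (k : ℂ) * h x) * hI

end Aux

/-- interior part of Proposition 3.1: for solutions of the
augmented system with compatible right-hand side, the auxiliary scalars a¹, a²
satisfy Helmholtz equations. -/
theorem augmented_system_scalars_helmholtz
    (G : Set (Fin 3 → ℝ)) (hG : IsOpen G) (k : ℝ) (hk : k ≠ 0)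
    (u1 u2 f1 f2 : (Fin 3 → ℝ) → Fin 3 → ℂ) (a1 a2 h1 h2 : (Fin 3 → ℝ) → ℂ)
    (hu1 : ContDiffOn ℝ (⊤ : ℕ∞) u1 G) (hu2 : ContDiffOn ℝ (⊤ : ℕ∞) u2 G)
    (ha1 : ContDiffOn ℝ (⊤ : ℕ∞) a1 G) (ha2 : ContDiffOn ℝ (⊤ : ℕ∞) a2 G)
    (e1 : ∀ x ∈ G, ∀ j, Complex.I * curl3 u2 x j + Complex.I * grad3 a2 x j
        - (k : ℂ) * u1 x j = f1 x j)
    (e2 : ∀ x ∈ G, -Complex.I * div3 u2 x - (k : ℂ) * a1 x = h1 x)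
    (e3 : ∀ x ∈ G, ∀ j, -Complex.I * curl3 u1 x j - Complex.I * grad3 a1 x j
        - (k : ℂ) * u2 x j = f2 x j)
    (e4 : ∀ x ∈ G, Complex.I * div3 u1 x - (k : ℂ) * a2 x = h2 x)
    -- compatibility conditions:
    (cc1 : ∀ x ∈ G, div3 f1 x - Complex.I * (k : ℂ) * h2 x = 0)
    (cc2 : ∀ x ∈ G, div3 f2 x + Complex.I * (k : ℂ) * h1 x = 0) :
    ∀ x ∈ G,
      lap3 a1 x + (k : ℂ) ^ 2 * a1 x = 0 ∧
      lap3 a2 x + (k : ℂ) ^ 2 * a2 x = 0 := by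
  intro x hx
  constructor
  · exact helmholtz_core hG k (-1) (by ring) u1 u2 f2 a1 h1 hu1 hu2 ha1
      (fun y hy j => by have := e3 y hy j; linear_combination this)
      (fun y hy => by have := e2 y hy; linear_combination this)
      (fun y hy => by have := cc2 y hy; linear_combination this) hx
  · exact helmholtz_core hG k 1 (by ring) u2 u1 f1 a2 h2 hu2 hu1 ha2
      (fun y hy j => by have := e1 y hy j; linear_combination this)
      (fun y hy => by have := e4 y hy; linear_combination this)
      (fun y hy => by have := cc1 y hy; linear_combination this) hx
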